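/- Let R = R₁ × R₂ be the product of G-graded commutative rings R₁ and R₂ (a G-graded ring with components (R₁)_α × (R₂)_α), let M₁ be a graded R₁-module and M₂ a graded R₂-module, and let M = M₁ × M₂ with the grading (M₁)_α × (M₂)_α, a graded R-module. Let C₂ be a non-zero graded submodule of M₂. Then C = 0 × C₂ is a graded strongly classical 2-absorbing second submodule of M if and only if C₂ is a graded strongly classical 2-absorbing second submodule of M₂. -/

import Mathlib

open Pointwise

section GradedDefs

variable {G : Type*} [Group G] [DecidableEq G] {R : Type*} [CommRing R]
  {M : Type*} [AddCommGroup M] [Module R M]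

/-- `R` is a `G`-graded commutative ring via the additive subgroups `𝒜 α`:
`R_α R_β ⊆ R_{αβ}` and `R = ⊕_{α ∈ G} R_α`. -/
structure IsRingGrading (𝒜 : G → AddSubgroup R) : Prop where
  one_mem : (1 : R) ∈ 𝒜 1
  mul_mem : ∀ ⦃α β : G⦄ ⦃r s : R⦄, r ∈ 𝒜 α → s ∈ 𝒜 β → r * s ∈ 𝒜 (α * β)
  isInternal : DirectSum.IsInternal 𝒜

/-- `M` is a graded module over the `G`-graded ring `R`:
`R_α M_β ⊆ M_{αβ}` and `M = ⊕_{α ∈ G} M_α`. -/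
structure IsModuleGrading (𝒜 : G → AddSubgroup R) (ℳ : G → AddSubgroup M) : Prop where
  smul_mem : ∀ ⦃α β : G⦄ ⦃r : R⦄ ⦃m : M⦄, r ∈ 𝒜 α → m ∈ ℳ β → r • m ∈ ℳ (α * β)
  isInternal : DirectSum.IsInternal ℳ

/-- A submodule `N` of `M` is a graded submodule iff `N = ⊕_{α ∈ G} (N ∩ M_α)`,
equivalently, every element of `N` is a sum of homogeneous elements of `N`. -/
def IsGradedSubmodule (ℳ : G → AddSubgroup M) (N : Submodule R M) : Prop :=
  ∀ n ∈ N, n ∈ Submodule.span R {m : M | m ∈ N ∧ ∃ α, m ∈ ℳ α}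

/-- An ideal `I` of `R` is a graded ideal iff `I = ⊕_{α ∈ G} (I ∩ R_α)`. -/
def IsGradedIdeal (𝒜 : G → AddSubgroup R) (I : Ideal R) : Prop :=
  ∀ r ∈ I, r ∈ Ideal.span {s : R | s ∈ I ∧ ∃ α, s ∈ 𝒜 α}

/-- A proper graded submodule `C` of `M` is completely graded irreducible if whenever
`C = ⋂_{λ ∈ Δ} C_λ` for a family of graded submodules `C_λ`, then `C = C_β` for some `β`. -/
def CompletelyGradedIrreducible (ℳ : G → AddSubgroup M) (C : Submodule R M) : Prop :=
  IsGradedSubmodule ℳ C ∧ C ≠ ⊤ ∧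
    ∀ S : Set (Submodule R M), (∀ D ∈ S, IsGradedSubmodule ℳ D) → C = sInf S → C ∈ S

/-- A non-zero graded submodule `C` of `M` is a graded classical 2-absorbing second submodule
if whenever `r, s, t ∈ h(R)`, `U` is a completely graded irreducible submodule of `M` and
`r·s·t·C ⊆ U`, then `r·s·C ⊆ U` or `s·t·C ⊆ U` or `r·t·C ⊆ U`. -/
def IsGrClassical2AbsorbingSecond (𝒜 : G → AddSubgroup R) (ℳ : G → AddSubgroup M)
    (C : Submodule R M) : Prop :=
  C ≠ ⊥ ∧ IsGradedSubmodule ℳ C ∧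
    ∀ r s t : R, (∃ α, r ∈ 𝒜 α) → (∃ β, s ∈ 𝒜 β) → (∃ γ, t ∈ 𝒜 γ) →
      ∀ U : Submodule R M, CompletelyGradedIrreducible ℳ U →
        r • s • t • C ≤ U → (r • s • C ≤ U ∨ s • t • C ≤ U ∨ r • t • C ≤ U)

/-- A non-zero graded submodule `C` of `M` is a graded strongly classical 2-absorbing second
submodule if whenever `r, s, t ∈ h(R)`, `U₁, U₂, U₃` are completely graded irreducible
submodules of `M` and `r·s·t·C ⊆ U₁ ∩ U₂ ∩ U₃`, then `r·s·C ⊆ U₁ ∩ U₂ ∩ U₃` or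
`s·t·C ⊆ U₁ ∩ U₂ ∩ U₃` or `r·t·C ⊆ U₁ ∩ U₂ ∩ U₃`. -/
def IsGrStronglyClassical2AbsorbingSecond (𝒜 : G → AddSubgroup R) (ℳ : G → AddSubgroup M)
    (C : Submodule R M) : Prop :=
  C ≠ ⊥ ∧ IsGradedSubmodule ℳ C ∧
    ∀ r s t : R, (∃ α, r ∈ 𝒜 α) → (∃ β, s ∈ 𝒜 β) → (∃ γ, t ∈ 𝒜 γ) →
      ∀ U₁ U₂ U₃ : Submodule R M, CompletelyGradedIrreducible ℳ U₁ →
        CompletelyGradedIrreducible ℳ U₂ → CompletelyGradedIrreducible ℳ U₃ →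
        r • s • t • C ≤ U₁ ⊓ U₂ ⊓ U₃ →
        (r • s • C ≤ U₁ ⊓ U₂ ⊓ U₃ ∨ s • t • C ≤ U₁ ⊓ U₂ ⊓ U₃ ∨ r • t • C ≤ U₁ ⊓ U₂ ⊓ U₃)

/-- A non-zero graded submodule `S` of `M` is a graded weakly second submodule if whenever
`r, s ∈ h(R)`, `N` is a graded submodule of `M` and `r·s·S ⊆ N`, then `r·S ⊆ N` or `s·S ⊆ N`. -/
def IsGrWeaklySecond (𝒜 : G → AddSubgroup R) (ℳ : G → AddSubgroup M)
    (S : Submodule R M) : Prop :=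
  S ≠ ⊥ ∧ IsGradedSubmodule ℳ S ∧
    ∀ r s : R, (∃ α, r ∈ 𝒜 α) → (∃ β, s ∈ 𝒜 β) →
      ∀ N : Submodule R M, IsGradedSubmodule ℳ N →
        r • s • S ≤ N → (r • S ≤ N ∨ s • S ≤ N)

/-- A proper graded ideal `I` of `R` is a graded 2-absorbing ideal if whenever `r, s, t ∈ h(R)`
with `r·s·t ∈ I`, then `r·s ∈ I` or `r·t ∈ I` or `s·t ∈ I`. -/
def IsGr2AbsorbingIdeal (𝒜 : G → AddSubgroup R) (I : Ideal R) : Prop :=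
  I ≠ ⊤ ∧ IsGradedIdeal 𝒜 I ∧
    ∀ r s t : R, (∃ α, r ∈ 𝒜 α) → (∃ β, s ∈ 𝒜 β) → (∃ γ, t ∈ 𝒜 γ) →
      r * s * t ∈ I → (r * s ∈ I ∨ r * t ∈ I ∨ s * t ∈ I)

end GradedDefs

section ProdSetup

variable {R₁ R₂ : Type*} [CommRing R₁] [CommRing R₂]
  {M₁ M₂ : Type*} [AddCommGroup M₁] [Module R₁ M₁] [AddCommGroup M₂] [Module R₂ M₂]

/-- The componentwise action of `R₁ × R₂` on `M₁ × M₂`. -/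
instance prodPairSMul : SMul (R₁ × R₂) (M₁ × M₂) :=
  ⟨fun r m => (r.1 • m.1, r.2 • m.2)⟩

/-- `M₁ × M₂` is a module over the product ring `R₁ × R₂`, acting componentwise. -/
instance prodPairModule : Module (R₁ × R₂) (M₁ × M₂) where
  one_smul m := Prod.ext (one_smul _ _) (one_smul _ _)
  mul_smul r s m := Prod.ext (mul_smul _ _ _) (mul_smul _ _ _)
  smul_zero r := Prod.ext (smul_zero _) (smul_zero _)
  smul_add r m n := Prod.ext (smul_add _ _ _) (smul_add _ _ _)
  add_smul r s m := Prod.ext (add_smul _ _ _) (add_smul _ _ _)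
  zero_smul m := Prod.ext (zero_smul _ _) (zero_smul _ _)

/-- The submodule `C₁ × C₂` of the `(R₁ × R₂)`-module `M₁ × M₂`. -/
def prodPairSubmodule (C₁ : Submodule R₁ M₁) (C₂ : Submodule R₂ M₂) :
    Submodule (R₁ × R₂) (M₁ × M₂) where
  carrier := (C₁ : Set M₁) ×ˢ (C₂ : Set M₂)
  add_mem' ha hb := ⟨C₁.add_mem ha.1 hb.1, C₂.add_mem ha.2 hb.2⟩
  zero_mem' := ⟨C₁.zero_mem, C₂.zero_mem⟩
  smul_mem' r m hm := ⟨C₁.smul_mem r.1 hm.1, C₂.smul_mem r.2 hm.2⟩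

end ProdSetup

section MyAux

open Pointwise

variable {G : Type*} [Group G] [DecidableEq G]

-- pointwise smul membership
lemma mem_psmul {R M : Type*} [CommRing R] [AddCommGroup M] [Module R M]
    {a : R} {S : Submodule R M} {x : M} : x ∈ a • S ↔ ∃ y ∈ S, a • y = x := by
  rw [← SetLike.mem_coe, Submodule.coe_pointwise_smul]
  exact Set.mem_smul_set

lemma isGradedSubmodule_top {R M : Type*} [CommRing R] [AddCommGroup M] [Module R M]
    (ℳ : G → AddSubgroup M) (h : DirectSum.IsInternal ℳ) :
    IsGradedSubmodule ℳ (⊤ : Submodule R M) := by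
  classical
  intro n _
  obtain ⟨x, rfl⟩ := h.2 n
  rw [DirectSum.coeAddMonoidHom_eq_dfinsuppSum]
  refine Submodule.sum_mem _ fun i _ => Submodule.subset_span ⟨trivial, i, (x i).2⟩

lemma isGradedSubmodule_bot {R M : Type*} [CommRing R] [AddCommGroup M] [Module R M]
    (ℳ : G → AddSubgroup M) : IsGradedSubmodule ℳ (⊥ : Submodule R M) := by
  intro n hn
  rw [Submodule.mem_bot] at hn
  simp [hn]

variable {R₁ R₂ : Type*} [CommRing R₁] [CommRing R₂]
  {M₁ M₂ : Type*} [AddCommGroup M₁] [Module R₁ M₁] [AddCommGroup M₂] [Module R₂ M₂]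

lemma pairSMul_def (r : R₁ × R₂) (m : M₁ × M₂) : r • m = (r.1 • m.1, r.2 • m.2) := rfl

lemma mem_prodPair {A : Submodule R₁ M₁} {B : Submodule R₂ M₂} {x : M₁ × M₂} :
    x ∈ prodPairSubmodule A B ↔ x.1 ∈ A ∧ x.2 ∈ B := Iff.rfl

/-- second component submodule of a submodule of the product. -/
def pairSnd (D : Submodule (R₁ × R₂) (M₁ × M₂)) : Submodule R₂ M₂ where
  carrier := {b | ((0 : M₁), b) ∈ D}
  zero_mem' := D.zero_mem
  add_mem' {a b} ha hb := by have := D.add_mem ha hb; simpa using this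
  smul_mem' r b hb := by
    have := D.smul_mem ((0 : R₁), r) hb
    simpa [pairSMul_def] using this

/-- first component submodule of a submodule of the product. -/
def pairFst (D : Submodule (R₁ × R₂) (M₁ × M₂)) : Submodule R₁ M₁ where
  carrier := {a | (a, (0 : M₂)) ∈ D}
  zero_mem' := D.zero_mem
  add_mem' {a b} ha hb := by have := D.add_mem ha hb; simpa using this
  smul_mem' r a ha := by
    have := D.smul_mem ((r, (0 : R₂))) ha
    simpa [pairSMul_def] using this

lemma mem_pairSnd {D : Submodule (R₁ × R₂) (M₁ × M₂)} {b : M₂} :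
    b ∈ pairSnd D ↔ ((0 : M₁), b) ∈ D := Iff.rfl

lemma mem_pairFst {D : Submodule (R₁ × R₂) (M₁ × M₂)} {a : M₁} :
    a ∈ pairFst D ↔ (a, (0 : M₂)) ∈ D := Iff.rfl

lemma pairSnd_prodPair (A : Submodule R₁ M₁) (B : Submodule R₂ M₂) :
    pairSnd (prodPairSubmodule A B) = B := by
  ext b; exact ⟨fun h => h.2, fun h => ⟨A.zero_mem, h⟩⟩

lemma pairFst_prodPair (A : Submodule R₁ M₁) (B : Submodule R₂ M₂) :
    pairFst (prodPairSubmodule A B) = A := by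
  ext a; exact ⟨fun h => h.1, fun h => ⟨h, B.zero_mem⟩⟩

lemma eq_prodPair (D : Submodule (R₁ × R₂) (M₁ × M₂)) :
    D = prodPairSubmodule (pairFst D) (pairSnd D) := by
  ext x
  constructor
  · intro hx
    constructor
    · have := D.smul_mem ((1 : R₁), (0 : R₂)) hx
      simpa [mem_pairFst, pairSMul_def] using this
    · have := D.smul_mem ((0 : R₁), (1 : R₂)) hx
      simpa [mem_pairSnd, pairSMul_def] using this
  · rintro ⟨h1, h2⟩
    have := D.add_mem (mem_pairFst.mp h1) (mem_pairSnd.mp h2)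
    simpa using this

lemma prodPair_le_iff {A A' : Submodule R₁ M₁} {B B' : Submodule R₂ M₂} :
    prodPairSubmodule A B ≤ prodPairSubmodule A' B' ↔ A ≤ A' ∧ B ≤ B' := by
  constructor
  · intro h
    exact ⟨fun a ha => (h (show (a, (0:M₂)) ∈ _ from ⟨ha, B.zero_mem⟩)).1,
           fun b hb => (h (show ((0:M₁), b) ∈ _ from ⟨A.zero_mem, hb⟩)).2⟩
  · rintro ⟨h1, h2⟩ x ⟨hx1, hx2⟩
    exact ⟨h1 hx1, h2 hx2⟩

lemma prodPair_inf (A A' : Submodule R₁ M₁) (B B' : Submodule R₂ M₂) :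
    prodPairSubmodule A B ⊓ prodPairSubmodule A' B' = prodPairSubmodule (A ⊓ A') (B ⊓ B') := by
  ext x
  simp only [Submodule.mem_inf, mem_prodPair]
  tauto

lemma prodPair_top_top :
    prodPairSubmodule (⊤ : Submodule R₁ M₁) (⊤ : Submodule R₂ M₂) = ⊤ := by
  ext x; simp [mem_prodPair]

lemma smul_prodPair (r : R₁ × R₂) (A : Submodule R₁ M₁) (B : Submodule R₂ M₂) :
    r • prodPairSubmodule A B = prodPairSubmodule (r.1 • A) (r.2 • B) := by
  ext x
  rw [mem_psmul]
  constructor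
  · rintro ⟨y, ⟨hy1, hy2⟩, rfl⟩
    exact ⟨mem_psmul.mpr ⟨y.1, hy1, rfl⟩, mem_psmul.mpr ⟨y.2, hy2, rfl⟩⟩
  · rintro ⟨h1, h2⟩
    obtain ⟨a, ha, ha'⟩ := mem_psmul.mp h1
    obtain ⟨b, hb, hb'⟩ := mem_psmul.mp h2
    exact ⟨(a, b), ⟨ha, hb⟩, by rw [pairSMul_def, ha', hb']⟩

lemma prodPair_top_sInf (S : Set (Submodule R₂ M₂)) :
    prodPairSubmodule (⊤ : Submodule R₁ M₁) (sInf S)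
      = sInf ((fun B => prodPairSubmodule (⊤ : Submodule R₁ M₁) B) '' S) := by
  ext x
  simp only [mem_prodPair, Submodule.mem_sInf, Set.forall_mem_image, Submodule.mem_top, true_and]

variable (𝒜₁ : G → AddSubgroup R₁) (𝒜₂ : G → AddSubgroup R₂)
  (ℳ₁ : G → AddSubgroup M₁) (ℳ₂ : G → AddSubgroup M₂)

lemma prodPair_graded {A : Submodule R₁ M₁} {B : Submodule R₂ M₂}
    (hA : IsGradedSubmodule ℳ₁ A) (hB : IsGradedSubmodule ℳ₂ B) :
    IsGradedSubmodule (fun α => (ℳ₁ α).prod (ℳ₂ α)) (prodPairSubmodule A B) := by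
  intro n hn
  set T : Set (M₁ × M₂) :=
    {m | m ∈ prodPairSubmodule A B ∧ ∃ α, m ∈ (ℳ₁ α).prod (ℳ₂ α)} with hT
  have key₁ : ∀ a, a ∈ Submodule.span R₁ {m : M₁ | m ∈ A ∧ ∃ α, m ∈ ℳ₁ α} →
      ((a, (0 : M₂)) : M₁ × M₂) ∈ Submodule.span (R₁ × R₂) T := by
    intro a ha
    induction ha using Submodule.span_induction with
    | mem y hy =>
        obtain ⟨α, hα⟩ := hy.2
        exact Submodule.subset_span ⟨⟨hy.1, B.zero_mem⟩, α, hα, (ℳ₂ α).zero_mem⟩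
    | zero => exact Submodule.zero_mem _
    | add a b _ _ ha hb => simpa using Submodule.add_mem _ ha hb
    | smul r a _ ha =>
        have := Submodule.smul_mem _ ((r, (0 : R₂))) ha
        simpa [pairSMul_def] using this
  have key₂ : ∀ b, b ∈ Submodule.span R₂ {m : M₂ | m ∈ B ∧ ∃ α, m ∈ ℳ₂ α} →
      (((0 : M₁), b) : M₁ × M₂) ∈ Submodule.span (R₁ × R₂) T := by
    intro b hb
    induction hb using Submodule.span_induction with
    | mem y hy =>
        obtain ⟨α, hα⟩ := hy.2
        exact Submodule.subset_span ⟨⟨A.zero_mem, hy.1⟩, α, (ℳ₁ α).zero_mem, hα⟩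
    | zero => exact Submodule.zero_mem _
    | add a b _ _ ha hb => simpa using Submodule.add_mem _ ha hb
    | smul r a _ ha =>
        have := Submodule.smul_mem _ (((0 : R₁), r)) ha
        simpa [pairSMul_def] using this
  have := Submodule.add_mem _ (key₁ n.1 (hA n.1 hn.1)) (key₂ n.2 (hB n.2 hn.2))
  simpa using this

lemma pairSnd_graded {D : Submodule (R₁ × R₂) (M₁ × M₂)}
    (hD : IsGradedSubmodule (fun α => (ℳ₁ α).prod (ℳ₂ α)) D) :
    IsGradedSubmodule ℳ₂ (pairSnd D) := by
  intro b hb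
  have key : ∀ x : M₁ × M₂,
      x ∈ Submodule.span (R₁ × R₂) {m | m ∈ D ∧ ∃ α, m ∈ (ℳ₁ α).prod (ℳ₂ α)} →
      x.2 ∈ Submodule.span R₂ {m : M₂ | m ∈ pairSnd D ∧ ∃ α, m ∈ ℳ₂ α} := by
    intro x hx
    induction hx using Submodule.span_induction with
    | mem y hy =>
        refine Submodule.subset_span ⟨?_, ?_⟩
        · have := D.smul_mem (((0 : R₁), (1 : R₂))) hy.1
          simpa [mem_pairSnd, pairSMul_def] using this
        · obtain ⟨α, hα⟩ := hy.2
          exact ⟨α, hα.2⟩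
    | zero => exact Submodule.zero_mem _
    | add a b _ _ ha hb => exact Submodule.add_mem _ ha hb
    | smul r a _ ha => exact Submodule.smul_mem _ r.2 ha
  exact key _ (hD _ (mem_pairSnd.mp hb))

lemma pairFst_graded {D : Submodule (R₁ × R₂) (M₁ × M₂)}
    (hD : IsGradedSubmodule (fun α => (ℳ₁ α).prod (ℳ₂ α)) D) :
    IsGradedSubmodule ℳ₁ (pairFst D) := by
  intro a ha
  have key : ∀ x : M₁ × M₂,
      x ∈ Submodule.span (R₁ × R₂) {m | m ∈ D ∧ ∃ α, m ∈ (ℳ₁ α).prod (ℳ₂ α)} →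
      x.1 ∈ Submodule.span R₁ {m : M₁ | m ∈ pairFst D ∧ ∃ α, m ∈ ℳ₁ α} := by
    intro x hx
    induction hx using Submodule.span_induction with
    | mem y hy =>
        refine Submodule.subset_span ⟨?_, ?_⟩
        · have := D.smul_mem ((((1 : R₁), (0 : R₂)))) hy.1
          simpa [mem_pairFst, pairSMul_def] using this
        · obtain ⟨α, hα⟩ := hy.2
          exact ⟨α, hα.1⟩
    | zero => exact Submodule.zero_mem _
    | add a b _ _ ha hb => exact Submodule.add_mem _ ha hb
    | smul r a _ ha => exact Submodule.smul_mem _ r.1 ha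
  exact key _ (hD _ (mem_pairFst.mp ha))

lemma cgi_prodPair_top {U : Submodule R₂ M₂}
    (h₁ : DirectSum.IsInternal ℳ₁)
    (hU : CompletelyGradedIrreducible ℳ₂ U) :
    CompletelyGradedIrreducible (fun α => (ℳ₁ α).prod (ℳ₂ α))
      (prodPairSubmodule (⊤ : Submodule R₁ M₁) U) := by
  obtain ⟨hUgr, hUne, hUinf⟩ := hU
  refine ⟨prodPair_graded ℳ₁ ℳ₂ (isGradedSubmodule_top ℳ₁ h₁) hUgr, ?_, ?_⟩
  · intro h
    apply hUne
    have h2 := pairSnd_prodPair (⊤ : Submodule R₁ M₁) U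
    rw [h] at h2
    rw [← h2]
    ext b
    simp [mem_pairSnd]
  · intro S hSgr hSeq
    have hle : ∀ D ∈ S, prodPairSubmodule (⊤ : Submodule R₁ M₁) U ≤ D := by
      intro D hD; rw [hSeq]; exact sInf_le hD
    have hfst : ∀ D ∈ S, ∀ a : M₁, (a, (0 : M₂)) ∈ D := fun D hD a =>
      hle D hD ⟨trivial, U.zero_mem⟩
    have hUeq : U = sInf (pairSnd '' S) := by
      ext b
      rw [Submodule.mem_sInf]
      constructor
      · rintro hb D ⟨D', hD', rfl⟩
        exact mem_pairSnd.mpr (hle D' hD' ⟨trivial, hb⟩)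
      · intro hb
        have : (((0 : M₁), b) : M₁ × M₂) ∈ sInf S :=
          Submodule.mem_sInf.mpr fun D hD => hb (pairSnd D) ⟨D, hD, rfl⟩
        rw [← hSeq] at this
        exact this.2
    obtain ⟨D, hD, hDeq⟩ := hUinf (pairSnd '' S)
      (by rintro _ ⟨D, hD, rfl⟩; exact pairSnd_graded ℳ₁ ℳ₂ (hSgr D hD)) hUeq
    have hfstD : pairFst D = ⊤ := eq_top_iff.mpr fun a _ => hfst D hD a
    have hDfull : D = prodPairSubmodule (⊤ : Submodule R₁ M₁) U := by
      rw [eq_prodPair D, hfstD, hDeq]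
    rwa [← hDfull]

lemma cgi_decomp {U : Submodule (R₁ × R₂) (M₁ × M₂)}
    (h₁ : DirectSum.IsInternal ℳ₁) (h₂ : DirectSum.IsInternal ℳ₂)
    (hU : CompletelyGradedIrreducible (fun α => (ℳ₁ α).prod (ℳ₂ α)) U) :
    CompletelyGradedIrreducible ℳ₂ (pairSnd U) ∨ pairSnd U = ⊤ := by
  obtain ⟨hUgr, hUne, hUinf⟩ := hU
  have hA : IsGradedSubmodule ℳ₁ (pairFst U) := pairFst_graded ℳ₁ ℳ₂ hUgr
  have hB : IsGradedSubmodule ℳ₂ (pairSnd U) := pairSnd_graded ℳ₁ ℳ₂ hUgr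
  have hmem := hUinf {prodPairSubmodule (pairFst U) ⊤, prodPairSubmodule ⊤ (pairSnd U)}
    (by
      rintro D (rfl | rfl)
      · exact prodPair_graded ℳ₁ ℳ₂ hA (isGradedSubmodule_top ℳ₂ h₂)
      · exact prodPair_graded ℳ₁ ℳ₂ (isGradedSubmodule_top ℳ₁ h₁) hB)
    (by
      rw [sInf_pair, prodPair_inf]
      simp only [inf_top_eq, top_inf_eq]
      exact eq_prodPair U)
  simp only [Set.mem_insert_iff, Set.mem_singleton_iff] at hmem
  rcases hmem with h | h
  · right
    rw [h, pairSnd_prodPair]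
  · left
    refine ⟨hB, ?_, ?_⟩
    · intro hTop
      apply hUne
      rw [h, hTop, prodPair_top_top]
    · intro S₂ hS₂gr hS₂eq
      have hUs : U = sInf ((fun B => prodPairSubmodule (⊤ : Submodule R₁ M₁) B) '' S₂) := by
        rw [h, hS₂eq]
        exact prodPair_top_sInf S₂
      obtain ⟨D, hD, hDeq⟩ := hUinf _
        (by
          rintro _ ⟨D, hD, rfl⟩
          exact prodPair_graded ℳ₁ ℳ₂ (isGradedSubmodule_top ℳ₁ h₁) (hS₂gr D hD)) hUs
      have : pairSnd U = D := by rw [← hDeq, pairSnd_prodPair]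
      rwa [this]

lemma helper₂ {C₂ : Submodule R₂ M₂} (hs : IsGrStronglyClassical2AbsorbingSecond 𝒜₂ ℳ₂ C₂)
    (r s t : R₂) (hr : ∃ α, r ∈ 𝒜₂ α) (hs' : ∃ β, s ∈ 𝒜₂ β) (ht : ∃ γ, t ∈ 𝒜₂ γ)
    (B₁ B₂ B₃ : Submodule R₂ M₂)
    (h₁ : CompletelyGradedIrreducible ℳ₂ B₁ ∨ B₁ = ⊤)
    (h₂ : CompletelyGradedIrreducible ℳ₂ B₂ ∨ B₂ = ⊤)
    (h₃ : CompletelyGradedIrreducible ℳ₂ B₃ ∨ B₃ = ⊤)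
    (hle : r • s • t • C₂ ≤ B₁ ⊓ B₂ ⊓ B₃) :
    r • s • C₂ ≤ B₁ ⊓ B₂ ⊓ B₃ ∨ s • t • C₂ ≤ B₁ ⊓ B₂ ⊓ B₃ ∨ r • t • C₂ ≤ B₁ ⊓ B₂ ⊓ B₃ := by
  have main := hs.2.2 r s t hr hs' ht
  rcases h₁ with h₁ | rfl <;> rcases h₂ with h₂ | rfl <;> rcases h₃ with h₃ | rfl <;>
    simp only [le_inf_iff, le_top, and_true, true_and] at hle ⊢
  · have := main B₁ B₂ B₃ h₁ h₂ h₃ (by simp only [le_inf_iff]; tauto)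
    simp only [le_inf_iff] at this; tauto
  · have := main B₁ B₂ B₂ h₁ h₂ h₂ (by simp only [le_inf_iff]; tauto)
    simp only [le_inf_iff] at this; tauto
  · have := main B₁ B₁ B₃ h₁ h₁ h₃ (by simp only [le_inf_iff]; tauto)
    simp only [le_inf_iff] at this; tauto
  · have := main B₁ B₁ B₁ h₁ h₁ h₁ (by simp only [le_inf_iff]; tauto)
    simp only [le_inf_iff] at this; tauto
  · have := main B₂ B₂ B₃ h₂ h₂ h₃ (by simp only [le_inf_iff]; tauto)
    simp only [le_inf_iff] at this; tauto
  · have := main B₂ B₂ B₂ h₂ h₂ h₂ (by simp only [le_inf_iff]; tauto)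
    simp only [le_inf_iff] at this; tauto
  · have := main B₃ B₃ B₃ h₃ h₃ h₃ (by simp only [le_inf_iff]; tauto)
    simp only [le_inf_iff] at this; tauto
  · tauto

end MyAux


theorem stmt18 {G : Type*} [Group G] [DecidableEq G]
    {R₁ R₂ : Type*} [CommRing R₁] [CommRing R₂]
    {M₁ M₂ : Type*} [AddCommGroup M₁] [Module R₁ M₁] [AddCommGroup M₂] [Module R₂ M₂]
    (𝒜₁ : G → AddSubgroup R₁) (𝒜₂ : G → AddSubgroup R₂)
    (ℳ₁ : G → AddSubgroup M₁) (ℳ₂ : G → AddSubgroup M₂)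
    (h𝒜₁ : IsRingGrading 𝒜₁) (h𝒜₂ : IsRingGrading 𝒜₂)
    (hℳ₁ : IsModuleGrading 𝒜₁ ℳ₁) (hℳ₂ : IsModuleGrading 𝒜₂ ℳ₂)
    (C₂ : Submodule R₂ M₂) (hC₂0 : C₂ ≠ ⊥) (hC₂gr : IsGradedSubmodule ℳ₂ C₂) :
    IsGrStronglyClassical2AbsorbingSecond (fun α => (𝒜₁ α).prod (𝒜₂ α))
        (fun α => (ℳ₁ α).prod (ℳ₂ α)) (prodPairSubmodule (⊥ : Submodule R₁ M₁) C₂) ↔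
      IsGrStronglyClassical2AbsorbingSecond 𝒜₂ ℳ₂ C₂ := by
  have hsmul : ∀ (a : R₁ × R₂) (X : Submodule R₂ M₂),
      a • prodPairSubmodule (⊥ : Submodule R₁ M₁) X = prodPairSubmodule ⊥ (a.2 • X) := by
    intro a X
    rw [smul_prodPair, Submodule.smul_bot']
  constructor
  · -- forward
    intro h
    refine ⟨hC₂0, hC₂gr, ?_⟩
    rintro r s t ⟨α, hrα⟩ ⟨β, hsβ⟩ ⟨γ, htγ⟩ U₁ U₂ U₃ h1 h2 h3 hle
    have hconv : ∀ X : Submodule R₂ M₂,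
        prodPairSubmodule (⊥ : Submodule R₁ M₁) X ≤
          prodPairSubmodule (⊤ : Submodule R₁ M₁) U₁ ⊓ prodPairSubmodule ⊤ U₂ ⊓
            prodPairSubmodule ⊤ U₃ ↔ X ≤ U₁ ⊓ U₂ ⊓ U₃ := by
      intro X
      rw [prodPair_inf, prodPair_inf, prodPair_le_iff]
      simp
    have key := h.2.2 ((0 : R₁), r) ((0 : R₁), s) ((0 : R₁), t)
      ⟨α, (𝒜₁ α).zero_mem, hrα⟩ ⟨β, (𝒜₁ β).zero_mem, hsβ⟩ ⟨γ, (𝒜₁ γ).zero_mem, htγ⟩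
      (prodPairSubmodule ⊤ U₁) (prodPairSubmodule ⊤ U₂) (prodPairSubmodule ⊤ U₃)
      (cgi_prodPair_top ℳ₁ ℳ₂ hℳ₁.isInternal h1)
      (cgi_prodPair_top ℳ₁ ℳ₂ hℳ₁.isInternal h2)
      (cgi_prodPair_top ℳ₁ ℳ₂ hℳ₁.isInternal h3)
      (by simp only [hsmul]; exact (hconv _).mpr hle)
    rcases key with k | k | k
    · left; simp only [hsmul] at k; exact (hconv _).mp k
    · right; left; simp only [hsmul] at k; exact (hconv _).mp k
    · right; right; simp only [hsmul] at k; exact (hconv _).mp k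
  · -- backward
    intro h
    refine ⟨?_, prodPair_graded ℳ₁ ℳ₂ (isGradedSubmodule_bot ℳ₁) hC₂gr, ?_⟩
    · obtain ⟨c, hc, hc0⟩ := Submodule.ne_bot_iff C₂ |>.mp hC₂0
      intro hb
      rw [Submodule.eq_bot_iff] at hb
      have := hb ((0 : M₁), c) ⟨Submodule.zero_mem _, hc⟩
      exact hc0 (congrArg Prod.snd this)
    · rintro r s t ⟨α, hrα⟩ ⟨β, hsβ⟩ ⟨γ, htγ⟩ U₁ U₂ U₃ h1 h2 h3 hle
      have hconv : ∀ Y : Submodule R₂ M₂,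
          prodPairSubmodule (⊥ : Submodule R₁ M₁) Y ≤ U₁ ⊓ U₂ ⊓ U₃ ↔
            Y ≤ pairSnd U₁ ⊓ pairSnd U₂ ⊓ pairSnd U₃ := by
        intro Y
        constructor
        · intro hY y hy
          have := hY (show (((0 : M₁), y) : M₁ × M₂) ∈ _ from ⟨Submodule.zero_mem _, hy⟩)
          simp only [Submodule.mem_inf] at this ⊢
          exact ⟨⟨this.1.1, this.1.2⟩, this.2⟩
        · intro hY x hx
          have hx1 : x.1 = 0 := by simpa using hx.1
          have hxe : x = (((0 : M₁), x.2) : M₁ × M₂) := by rw [← hx1]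
          have h2 := hY hx.2
          simp only [Submodule.mem_inf] at h2 ⊢
          rw [hxe]
          exact ⟨⟨h2.1.1, h2.1.2⟩, h2.2⟩
      have hle' : r.2 • s.2 • t.2 • C₂ ≤ pairSnd U₁ ⊓ pairSnd U₂ ⊓ pairSnd U₃ :=
        (hconv _).mp (by simpa only [hsmul] using hle)
      have key := helper₂ 𝒜₂ ℳ₂ h r.2 s.2 t.2 ⟨α, hrα.2⟩ ⟨β, hsβ.2⟩ ⟨γ, htγ.2⟩
        (pairSnd U₁) (pairSnd U₂) (pairSnd U₃)
        (cgi_decomp ℳ₁ ℳ₂ hℳ₁.isInternal hℳ₂.isInternal h1)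
        (cgi_decomp ℳ₁ ℳ₂ hℳ₁.isInternal hℳ₂.isInternal h2)
        (cgi_decomp ℳ₁ ℳ₂ hℳ₁.isInternal hℳ₂.isInternal h3) hle'
      rcases key with k | k | k
      · left; simp only [hsmul]; exact (hconv _).mpr k
      · right; left; simp only [hsmul]; exact (hconv _).mpr k
      · right; right; simp only [hsmul]; exact (hconv _).mpr k
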